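/- Let M and Y be random variables on a probability space, with M taking values in a finite set ℳ of cardinality d ≥ 2, and let 0 ≤ ε ≤ 1. Fix an outcome y of Y with P(Y = y) > 0, and suppose the variational distance between the distribution of M and the conditional distribution of M given Y = y satisfies ∑_{m∈ℳ} |P(M = m) − P(M = m | Y = y)| ≤ ε. Then H(M) − H(M | Y = y) ≤ h(ε/2) + (ε/2)·log(d − 1), where H(M | Y = y) denotes the Shannon entropy of the conditional distribution of M given Y = y. -/

import Mathlib

open MeasureTheory

/-- Shannon entropy (in nats) of a distribution on a finite set, with the
convention `0 * log 0 = 0` (automatic since `Real.log 0 = 0`). -/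
noncomputable def shannonEnt {S : Type*} [Fintype S] (p : S → ℝ) : ℝ :=
  -∑ s, p s * Real.log (p s)

/-- The probability that a random variable `X` takes the value `s`. -/
noncomputable def prob {Ω S : Type*} [MeasurableSpace Ω] (μ : Measure Ω)
    (X : Ω → S) (s : S) : ℝ :=
  (μ (X ⁻¹' {s})).toReal

/-- Shannon entropy of (the distribution of) a finitely-valued random variable. -/
noncomputable def entropy {Ω S : Type*} [MeasurableSpace Ω] [Fintype S]
    (μ : Measure Ω) (X : Ω → S) : ℝ :=
  shannonEnt (fun s => prob μ X s)

/-- Mutual information `I(X;Y) = H(X) + H(Y) - H(X,Y)`. -/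
noncomputable def mutualInfo {Ω S T : Type*} [MeasurableSpace Ω] [Fintype S] [Fintype T]
    (μ : Measure Ω) (X : Ω → S) (Y : Ω → T) : ℝ :=
  entropy μ X + entropy μ Y - entropy μ (fun ω => (X ω, Y ω))

/-- Conditional mutual information `I(X;Y|Z) = I(X;(Y,Z)) - I(X;Z)`. -/
noncomputable def condMutualInfo {Ω S T U : Type*} [MeasurableSpace Ω]
    [Fintype S] [Fintype T] [Fintype U]
    (μ : Measure Ω) (X : Ω → S) (Y : Ω → T) (Z : Ω → U) : ℝ :=
  mutualInfo μ X (fun ω => (Y ω, Z ω)) - mutualInfo μ X Z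

/-- The conditional probability `P(X = s | Y = y)`. -/
noncomputable def condProb {Ω S T : Type*} [MeasurableSpace Ω] (μ : Measure Ω)
    (X : Ω → S) (Y : Ω → T) (y : T) (s : S) : ℝ :=
  (μ (X ⁻¹' {s} ∩ Y ⁻¹' {y})).toReal / (μ (Y ⁻¹' {y})).toReal

/-- Binary entropy function (in nats). -/
noncomputable def binEnt (t : ℝ) : ℝ :=
  -(t * Real.log t) - (1 - t) * Real.log (1 - t)


section Aux

open Real Finset

lemma binEnt_eq (t : ℝ) : binEnt t = Real.binEntropy t := by
  simp [binEnt, Real.binEntropy, Real.log_inv]; ring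

/-- Subadditivity of `negMulLog` on nonnegatives. -/
lemma negMulLog_add_le {x y : ℝ} (hx : 0 ≤ x) (hy : 0 ≤ y) :
    Real.negMulLog (x + y) ≤ Real.negMulLog x + Real.negMulLog y := by
  rcases eq_or_lt_of_le hx with h | hx'
  · simp [← h]
  rcases eq_or_lt_of_le hy with h | hy'
  · simp [← h]
  have h1 : x * Real.log x ≤ x * Real.log (x + y) :=
    mul_le_mul_of_nonneg_left (Real.log_le_log hx' (by linarith)) hx
  have h2 : y * Real.log y ≤ y * Real.log (x + y) :=
    mul_le_mul_of_nonneg_left (Real.log_le_log hy' (by linarith)) hy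
  simp only [Real.negMulLog, neg_mul]
  nlinarith [add_mul x y (Real.log (x + y))]

lemma negMulLog_sum_le {ι : Type*} (s : Finset ι) (v : ι → ℝ) (hv : ∀ i, 0 ≤ v i) :
    Real.negMulLog (∑ i ∈ s, v i) ≤ ∑ i ∈ s, Real.negMulLog (v i) := by
  classical
  induction s using Finset.induction_on with
  | empty => simp
  | @insert j s' hj ih =>
    rw [Finset.sum_insert hj, Finset.sum_insert hj]
    calc Real.negMulLog (v j + ∑ i ∈ s', v i)
        ≤ Real.negMulLog (v j) + Real.negMulLog (∑ i ∈ s', v i) :=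
          negMulLog_add_le (hv j) (Finset.sum_nonneg fun i _ => hv i)
      _ ≤ _ := by linarith

/-- Gibbs-type maximum-entropy bound. -/
lemma sum_negMulLog_le {ι : Type*} (s : Finset ι) (u : ι → ℝ) (hu : ∀ i, 0 ≤ u i)
    {T : ℝ} (hT : 0 < T) (hsum : ∑ i ∈ s, u i = T) (hs : s.Nonempty) :
    ∑ i ∈ s, Real.negMulLog (u i) ≤ T * Real.log s.card + Real.negMulLog T := by
  have hcard : (0 : ℝ) < s.card := by exact_mod_cast Finset.card_pos.mpr hs
  have key : ∀ i ∈ s, Real.negMulLog (u i)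
      ≤ u i * Real.log s.card - u i * Real.log T + (T / s.card - u i) := by
    intro i _
    rcases eq_or_lt_of_le (hu i) with h | hui
    · simp only [← h, Real.negMulLog_zero, mul_zero, zero_mul, sub_zero, zero_sub]
      have : 0 ≤ T / s.card := le_of_lt (div_pos hT hcard)
      linarith
    · have hx : (0 : ℝ) < T / (s.card * u i) := div_pos hT (mul_pos hcard hui)
      have := Real.log_le_sub_one_of_pos hx
      have hlog : Real.log (T / (s.card * u i))
          = Real.log T - (Real.log s.card + Real.log (u i)) := by
        rw [Real.log_div (ne_of_gt hT) (ne_of_gt (mul_pos hcard hui)), Real.log_mul (ne_of_gt hcard) (ne_of_gt hui)]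
      have hmul : u i * Real.log (T / (s.card * u i)) ≤ u i * (T / (s.card * u i) - 1) :=
        mul_le_mul_of_nonneg_left this (hu i)
      have hdiv : u i * (T / (s.card * u i)) = T / s.card := by
        field_simp
      rw [hlog] at hmul
      simp only [Real.negMulLog, neg_mul]
      nlinarith [hmul]
  calc ∑ i ∈ s, Real.negMulLog (u i)
      ≤ ∑ i ∈ s, (u i * Real.log s.card - u i * Real.log T + (T / s.card - u i)) :=
        Finset.sum_le_sum key
    _ = T * Real.log s.card + Real.negMulLog T := by
        rw [Finset.sum_add_distrib, Finset.sum_sub_distrib, ← Finset.sum_mul, ← Finset.sum_mul,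
          hsum, Finset.sum_sub_distrib, Finset.sum_const, hsum]
        simp only [Real.negMulLog, neg_mul]
        field_simp
        ring_nf; rw [mul_inv_cancel_right₀ (ne_of_gt hcard)]; ring

/-- Per-coordinate concavity-type lower bound. -/
lemma negMulLog_mix_le {c v T : ℝ} (hc : 0 ≤ c) (hv : 0 ≤ v) (hT0 : 0 < T) (hT1 : T < 1) :
    Real.negMulLog c + c * Real.log (1 - T) + Real.negMulLog v + v * Real.log T
      ≤ Real.negMulLog (c + v) := by
  rcases eq_or_lt_of_le hc with h | hc'
  · have hlogT : Real.log T ≤ 0 := Real.log_nonpos (le_of_lt hT0) (le_of_lt hT1)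
    simp only [← h, Real.negMulLog_zero, zero_mul, zero_add, add_zero]
    nlinarith [mul_nonneg hv (neg_nonneg.mpr hlogT)]
  rcases eq_or_lt_of_le hv with h | hv'
  · have hlog1T : Real.log (1 - T) ≤ 0 := Real.log_nonpos (by linarith) (by linarith)
    simp only [← h, Real.negMulLog_zero, zero_mul, add_zero]
    nlinarith [mul_nonneg hc (neg_nonneg.mpr hlog1T)]
  have hcv : (0:ℝ) < c + v := by linarith
  have h1 : Real.log ((1 - T) * (c + v) / c) ≤ (1 - T) * (c + v) / c - 1 :=
    Real.log_le_sub_one_of_pos (div_pos (mul_pos (by linarith) hcv) hc')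
  have h2 : Real.log (T * (c + v) / v) ≤ T * (c + v) / v - 1 :=
    Real.log_le_sub_one_of_pos (div_pos (mul_pos hT0 hcv) hv')
  have e1 : Real.log ((1 - T) * (c + v) / c)
      = Real.log (1 - T) + Real.log (c + v) - Real.log c := by
    rw [Real.log_div (ne_of_gt (mul_pos (by linarith : (0:ℝ) < 1 - T) hcv)) (ne_of_gt hc'), Real.log_mul (by linarith) (ne_of_gt hcv)]
  have e2 : Real.log (T * (c + v) / v)
      = Real.log T + Real.log (c + v) - Real.log v := by
    rw [Real.log_div (ne_of_gt (mul_pos hT0 hcv)) (ne_of_gt hv'), Real.log_mul (ne_of_gt hT0) (ne_of_gt hcv)]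
  have m1 : c * Real.log ((1 - T) * (c + v) / c) ≤ (1 - T) * (c + v) - c := by
    have := mul_le_mul_of_nonneg_left h1 hc
    have hd : c * ((1 - T) * (c + v) / c) = (1 - T) * (c + v) := by field_simp
    nlinarith [this]
  have m2 : v * Real.log (T * (c + v) / v) ≤ T * (c + v) - v := by
    have := mul_le_mul_of_nonneg_left h2 hv
    have hd : v * (T * (c + v) / v) = T * (c + v) := by field_simp
    nlinarith [this]
  rw [e1] at m1; rw [e2] at m2
  simp only [Real.negMulLog, neg_mul]
  nlinarith [m1, m2]

/-- Pure Fannes-type bound for probability vectors. -/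
lemma shannon_diff_bound {ι : Type*} [Fintype ι] (p q : ι → ℝ)
    (hp0 : ∀ i, 0 ≤ p i) (hq0 : ∀ i, 0 ≤ q i)
    (hp1 : ∑ i, p i = 1) (hq1 : ∑ i, q i = 1)
    (hd : 2 ≤ Fintype.card ι)
    (ε : ℝ) (hε0 : 0 ≤ ε) (hε1 : ε ≤ 1)
    (hvar : ∑ i, |p i - q i| ≤ ε) :
    shannonEnt p - shannonEnt q
      ≤ binEnt (ε / 2) + (ε / 2) * Real.log ((Fintype.card ι : ℝ) - 1) := by
  have hdR : (1 : ℝ) ≤ (Fintype.card ι : ℝ) - 1 := by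
    have : (2 : ℝ) ≤ (Fintype.card ι : ℝ) := by exact_mod_cast hd
    linarith
  have hlogd : 0 ≤ Real.log ((Fintype.card ι : ℝ) - 1) := Real.log_nonneg hdR
  set T : ℝ := (∑ i, |p i - q i|) / 2 with hTdef
  have hT0 : 0 ≤ T := by
    have : 0 ≤ ∑ i, |p i - q i| := Finset.sum_nonneg fun i _ => abs_nonneg _
    positivity
  have hTε : T ≤ ε / 2 := by
    rw [hTdef]; linarith
  have hThalf : T ≤ 1 / 2 := le_trans hTε (by linarith)
  rcases eq_or_lt_of_le hT0 with hTz | hTpos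
  · -- T = 0 : p = q
    have hzero : ∑ i, |p i - q i| = 0 := by
      rw [hTdef] at hTz; linarith
    have hpq : ∀ i, p i = q i := by
      intro i
      have h := (Finset.sum_eq_zero_iff_of_nonneg (fun i _ => abs_nonneg (p i - q i))).mp
        hzero i (Finset.mem_univ i)
      have := abs_eq_zero.mp h
      linarith
    have : shannonEnt p = shannonEnt q := by
      unfold shannonEnt
      congr 1
      exact Finset.sum_congr rfl fun i _ => by rw [hpq i]
    rw [this, sub_self]
    have hb : 0 ≤ binEnt (ε / 2) := by
      rw [binEnt_eq]; exact Real.binEntropy_nonneg (by linarith) (by linarith)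
    have : 0 ≤ ε / 2 * Real.log ((Fintype.card ι : ℝ) - 1) :=
      mul_nonneg (by linarith) hlogd
    linarith
  · -- main case: 0 < T
    set c : ι → ℝ := fun i => min (p i) (q i) with hcdef
    set u : ι → ℝ := fun i => p i - c i with hudef
    set v : ι → ℝ := fun i => q i - c i with hvdef
    have hu0 : ∀ i, 0 ≤ u i := fun i => by simp [hudef, hcdef, min_le_left]
    have hv0 : ∀ i, 0 ≤ v i := fun i => by simp [hvdef, hcdef, min_le_right]
    have hc0 : ∀ i, 0 ≤ c i := fun i => le_min (hp0 i) (hq0 i)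
    have huv : ∀ i, u i + v i = |p i - q i| := by
      intro i
      rcases le_total (p i) (q i) with h | h
      · rw [abs_of_nonpos (by linarith : p i - q i ≤ 0)]
        simp only [hudef, hvdef, hcdef]
        rw [min_eq_left h]; ring
      · rw [abs_of_nonneg (by linarith : 0 ≤ p i - q i)]
        simp only [hudef, hvdef, hcdef]
        rw [min_eq_right h]; ring
    have husum : ∑ i, u i = T := by
      have h1 : ∑ i, (u i + v i) = 2 * T := by
        rw [Finset.sum_congr rfl fun i _ => huv i, hTdef]; ring
      have h2 : ∑ i, (u i - v i) = 0 := by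
        have : ∀ i, u i - v i = p i - q i := fun i => by simp only [hudef, hvdef]; ring
        rw [Finset.sum_congr rfl fun i _ => this i, Finset.sum_sub_distrib, hp1, hq1, sub_self]
      rw [Finset.sum_add_distrib] at h1
      rw [Finset.sum_sub_distrib] at h2
      linarith
    have hvsum : ∑ i, v i = T := by
      have h1 : ∑ i, (u i + v i) = 2 * T := by
        rw [Finset.sum_congr rfl fun i _ => huv i, hTdef]; ring
      rw [Finset.sum_add_distrib, husum] at h1
      linarith
    have hcsum : ∑ i, c i = 1 - T := by
      have : ∀ i, c i = p i - u i := fun i => by simp [hudef]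
      rw [Finset.sum_congr rfl fun i _ => this i, Finset.sum_sub_distrib, hp1, husum]
    have hT1 : T < 1 := lt_of_le_of_lt hThalf (by norm_num)
    -- the support of u
    set s : Finset ι := Finset.univ.filter (fun i => q i < p i) with hsdef
    have hu_off : ∀ i ∉ s, u i = 0 := by
      intro i hi
      simp only [hsdef, Finset.mem_filter, Finset.mem_univ, true_and, not_lt] at hi
      simp [hudef, hcdef, min_eq_left hi]
    have hs_ne : s.Nonempty := by
      by_contra h
      rw [Finset.not_nonempty_iff_eq_empty] at h
      have : ∑ i, u i = 0 := by
        apply Finset.sum_eq_zero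
        intro i _
        exact hu_off i (by simp [h])
      rw [husum] at this; linarith
    have hs_card : (s.card : ℝ) ≤ (Fintype.card ι : ℝ) - 1 := by
      have hne : s ≠ Finset.univ := by
        intro h
        have : ∑ i, v i = 0 := by
          apply Finset.sum_eq_zero
          intro i _
          have hi : q i < p i := by
            have := Finset.mem_univ i
            rw [← h] at this
            simpa [hsdef] using this
          simp [hvdef, hcdef, min_eq_right (le_of_lt hi)]
        rw [hvsum] at this; linarith
      have hlt : s.card < Fintype.card ι := by
        rcases lt_or_eq_of_le (Finset.card_le_card (Finset.subset_univ s)) with h | h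
        · simpa [Finset.card_univ] using h
        · exact absurd (Finset.eq_univ_of_card s (by simpa [Finset.card_univ] using h)) hne
      have hnat : s.card + 1 ≤ Fintype.card ι := hlt
      have : (s.card : ℝ) + 1 ≤ (Fintype.card ι : ℝ) := by exact_mod_cast hnat
      linarith
    have hs_card1 : (1 : ℝ) ≤ (s.card : ℝ) := by
      exact_mod_cast Finset.card_pos.mpr hs_ne
    -- upper bound for shannonEnt p
    have hEnt : ∀ r : ι → ℝ, shannonEnt r = ∑ i, Real.negMulLog (r i) := by
      intro r
      unfold shannonEnt
      rw [← Finset.sum_neg_distrib]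
      exact Finset.sum_congr rfl fun i _ => by simp [Real.negMulLog]
    have hup : shannonEnt p ≤ ∑ i, Real.negMulLog (c i) + (T * Real.log s.card + Real.negMulLog T) := by
      rw [hEnt p]
      have h1 : ∀ i, Real.negMulLog (p i) ≤ Real.negMulLog (c i) + Real.negMulLog (u i) := by
        intro i
        have : p i = c i + u i := by simp [hudef]
        rw [this]
        exact negMulLog_add_le (hc0 i) (hu0 i)
      calc ∑ i, Real.negMulLog (p i)
          ≤ ∑ i, (Real.negMulLog (c i) + Real.negMulLog (u i)) := Finset.sum_le_sum fun i _ => h1 i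
        _ = ∑ i, Real.negMulLog (c i) + ∑ i, Real.negMulLog (u i) := Finset.sum_add_distrib
        _ ≤ _ := by
            have hrestrict : ∑ i, Real.negMulLog (u i) = ∑ i ∈ s, Real.negMulLog (u i) := by
              symm
              apply Finset.sum_subset (Finset.subset_univ s)
              intro i _ hi
              rw [hu_off i hi, Real.negMulLog_zero]
            have husums : ∑ i ∈ s, u i = T := by
              rw [← husum]
              apply Finset.sum_subset (Finset.subset_univ s)
              intro i _ hi
              exact hu_off i hi
            have := sum_negMulLog_le s u hu0 hTpos husums hs_ne
            rw [hrestrict]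
            linarith
    have hdown : ∑ i, Real.negMulLog (c i) + (1 - T) * Real.log (1 - T) + Real.negMulLog T
        + T * Real.log T ≤ shannonEnt q := by
      rw [hEnt q]
      have h1 : ∀ i, Real.negMulLog (c i) + c i * Real.log (1 - T) + Real.negMulLog (v i)
          + v i * Real.log T ≤ Real.negMulLog (q i) := by
        intro i
        have : q i = c i + v i := by simp [hvdef]
        rw [this]
        exact negMulLog_mix_le (hc0 i) (hv0 i) hTpos hT1
      have h2 := Finset.sum_le_sum fun i (_ : i ∈ Finset.univ) => h1 i
      have h3 : ∑ i, (Real.negMulLog (c i) + c i * Real.log (1 - T) + Real.negMulLog (v i)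
          + v i * Real.log T)
          = ∑ i, Real.negMulLog (c i) + (1 - T) * Real.log (1 - T)
            + ∑ i, Real.negMulLog (v i) + T * Real.log T := by
        simp only [Finset.sum_add_distrib, ← Finset.sum_mul, hcsum, hvsum]
      rw [h3] at h2
      have h4 : Real.negMulLog T ≤ ∑ i, Real.negMulLog (v i) := by
        have := negMulLog_sum_le Finset.univ v hv0
        rw [hvsum] at this
        exact this
      linarith
    have hcore : shannonEnt p - shannonEnt q
        ≤ binEnt T + T * Real.log ((Fintype.card ι : ℝ) - 1) := by
      have hlogs : Real.log (s.card : ℝ) ≤ Real.log ((Fintype.card ι : ℝ) - 1) :=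
        Real.log_le_log (by linarith) hs_card
      have hTlog : T * Real.log (s.card : ℝ) ≤ T * Real.log ((Fintype.card ι : ℝ) - 1) :=
        mul_le_mul_of_nonneg_left hlogs hT0
      have : binEnt T = -(T * Real.log T) - (1 - T) * Real.log (1 - T) := rfl
      rw [this]
      linarith
    -- monotonicity step
    have hmono : binEnt T + T * Real.log ((Fintype.card ι : ℝ) - 1)
        ≤ binEnt (ε / 2) + (ε / 2) * Real.log ((Fintype.card ι : ℝ) - 1) := by
      have h1 : binEnt T ≤ binEnt (ε / 2) := by
        rw [binEnt_eq, binEnt_eq]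
        rcases eq_or_lt_of_le hTε with h | h
        · rw [h]
        · exact le_of_lt (Real.binEntropy_strictMonoOn
            (Set.mem_Icc.mpr ⟨hT0, by rw [show ((2:ℝ)⁻¹ = 1/2) by norm_num]; exact hThalf⟩)
            (Set.mem_Icc.mpr ⟨by linarith, by rw [show ((2:ℝ)⁻¹ = 1/2) by norm_num]; linarith⟩) h)
      have h2 : T * Real.log ((Fintype.card ι : ℝ) - 1)
          ≤ (ε / 2) * Real.log ((Fintype.card ι : ℝ) - 1) :=
        mul_le_mul_of_nonneg_right hTε hlogd
      linarith
    linarith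

end Aux

/-- Per-outcome Fannes–Audenaert-type bound: if the conditional distribution of a
message `M` given `Y = y` is `ε`-close in variational distance to the distribution
of `M`, then `H(M) - H(M | Y = y) ≤ h(ε/2) + (ε/2) log(d-1)`. -/
theorem entropy_difference_bound_of_variational_distance
    {Ω 𝓜 𝒴 : Type*} [MeasurableSpace Ω]
    [Fintype 𝓜] [MeasurableSpace 𝓜] [MeasurableSingletonClass 𝓜]
    [MeasurableSpace 𝒴] [MeasurableSingletonClass 𝒴]
    (μ : Measure Ω) [IsProbabilityMeasure μ]
    (M : Ω → 𝓜) (Y : Ω → 𝒴) (hM : Measurable M) (hY : Measurable Y)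
    (hd : 2 ≤ Fintype.card 𝓜)
    (ε : ℝ) (hε0 : 0 ≤ ε) (hε1 : ε ≤ 1)
    (y : 𝒴) (hy : 0 < (μ (Y ⁻¹' {y})).toReal)
    (hvar : ∑ m, |prob μ M m - condProb μ M Y y m| ≤ ε) :
    entropy μ M - shannonEnt (fun m => condProb μ M Y y m)
      ≤ binEnt (ε / 2) + (ε / 2) * Real.log ((Fintype.card 𝓜 : ℝ) - 1) := by
  classical
  have hμfin : ∀ (A : Set Ω), μ A ≠ ⊤ := fun A => measure_ne_top μ A
  set p : 𝓜 → ℝ := fun m => prob μ M m with hpdef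
  set q : 𝓜 → ℝ := fun m => condProb μ M Y y m with hqdef
  have hp0 : ∀ m, 0 ≤ p m := fun m => ENNReal.toReal_nonneg
  have hq0 : ∀ m, 0 ≤ q m := fun m => div_nonneg ENNReal.toReal_nonneg ENNReal.toReal_nonneg
  have hmeas : ∀ m : 𝓜, MeasurableSet (M ⁻¹' {m}) := fun m => hM (measurableSet_singleton m)
  have hp1 : ∑ m, p m = 1 := by
    have h1 : ∑ m ∈ Finset.univ, μ (M ⁻¹' {m}) = μ (M ⁻¹' ↑(Finset.univ : Finset 𝓜)) :=
      sum_measure_preimage_singleton Finset.univ (fun m _ => hmeas m)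
    have h2 : μ (M ⁻¹' ↑(Finset.univ : Finset 𝓜)) = 1 := by
      rw [Finset.coe_univ, Set.preimage_univ, measure_univ]
    simp only [hpdef, prob]
    rw [← ENNReal.toReal_sum (fun m _ => hμfin _), h1, h2, ENNReal.toReal_one]
  have hq1 : ∑ m, q m = 1 := by
    set ν : Measure Ω := μ.restrict (Y ⁻¹' {y}) with hνdef
    have hrw : ∀ m : 𝓜, μ (M ⁻¹' {m} ∩ Y ⁻¹' {y}) = ν (M ⁻¹' {m}) := by
      intro m
      rw [hνdef, Measure.restrict_apply (hmeas m)]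
    have h1 : ∑ m ∈ Finset.univ, ν (M ⁻¹' {m}) = ν (M ⁻¹' ↑(Finset.univ : Finset 𝓜)) :=
      sum_measure_preimage_singleton Finset.univ (fun m _ => hmeas m)
    have h2 : ν (M ⁻¹' ↑(Finset.univ : Finset 𝓜)) = μ (Y ⁻¹' {y}) := by
      rw [Finset.coe_univ, Set.preimage_univ, hνdef, Measure.restrict_apply MeasurableSet.univ,
        Set.univ_inter]
    have hνfin : ∀ m : 𝓜, ν (M ⁻¹' {m}) ≠ ⊤ := by
      intro m
      rw [hνdef, Measure.restrict_apply (hmeas m)]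
      exact hμfin _
    simp only [hqdef, condProb]
    rw [← Finset.sum_div]
    have h3 : ∑ m, (μ (M ⁻¹' {m} ∩ Y ⁻¹' {y})).toReal = (μ (Y ⁻¹' {y})).toReal := by
      have : ∀ m : 𝓜, (μ (M ⁻¹' {m} ∩ Y ⁻¹' {y})).toReal = (ν (M ⁻¹' {m})).toReal := by
        intro m; rw [hrw m]
      rw [Finset.sum_congr rfl fun m _ => this m, ← ENNReal.toReal_sum (fun m _ => hνfin m),
        h1, h2]
    rw [h3, div_self (ne_of_gt hy)]
  have hent : entropy μ M = shannonEnt p := rfl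
  rw [hent]
  exact shannon_diff_bound p q hp0 hq0 hp1 hq1 hd ε hε0 hε1 hvar
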